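/- Let k ≥ 1 and let f: {-1,1}^n → ℝ satisfy f̂(S) = 0 for all |S| < k. Then (1 - e^{-2})·E f² ≤ 2·∑_{i=1}^n ∫_0^{1/k} ‖D_i f‖²_{1+e^{-2t}} dt, where D_i f(x) = [f(x) - f(x with i-th coordinate flipped)]/2. -/

import Mathlib

open MeasureTheory

/-- Expectation with respect to the uniform measure on `{-1,1}^n` (modeled by `Fin n → Bool`). -/
noncomputable def cubeE (n : ℕ) (f : (Fin n → Bool) → ℝ) : ℝ := (∑ x, f x) / 2 ^ n

/-- Fourier coefficient `f̂(S) = E[f · W_S]`. -/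
noncomputable def cubeCoeff (n : ℕ) (f : (Fin n → Bool) → ℝ) (S : Finset (Fin n)) : ℝ :=
  cubeE n fun x => f x * ∏ i ∈ S, (if x i then (1 : ℝ) else -1)

/-- The discrete derivative `D_i f(x) = (f(x) - f(x with i-th coordinate flipped))/2`. -/
noncomputable def cubeD (n : ℕ) (i : Fin n) (f : (Fin n → Bool) → ℝ) :
    (Fin n → Bool) → ℝ :=
  fun x => (f x - f (Function.update x i (! x i))) / 2

/-- The `q`-norm `‖f‖_q = (E|f|^q)^{1/q}` on the uniform cube. -/
noncomputable def cubeNorm (n : ℕ) (q : ℝ) (f : (Fin n → Bool) → ℝ) : ℝ :=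
  (cubeE n fun x => |f x| ^ q) ^ (1 / q)

namespace Cube

def chi (b : Bool) : ℝ := if b then 1 else -1

def W (n : ℕ) (S : Finset (Fin n)) (x : Fin n → Bool) : ℝ := ∏ i ∈ S, chi (x i)

variable {n : ℕ}

lemma chi_mul_chi (b : Bool) : chi b * chi b = 1 := by cases b <;> norm_num [chi]

lemma chi_not (b : Bool) : chi (!b) = - chi b := by cases b <;> simp [chi]

lemma coeff_def (f : (Fin n → Bool) → ℝ) (S : Finset (Fin n)) :
    cubeCoeff n f S = cubeE n fun x => f x * W n S x := rfl

lemma cubeE_congr {f g : (Fin n → Bool) → ℝ} (h : ∀ x, f x = g x) : cubeE n f = cubeE n g := by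
  unfold cubeE; rw [Finset.sum_congr rfl fun x _ => h x]

lemma cubeE_add (f g : (Fin n → Bool) → ℝ) :
    cubeE n (fun x => f x + g x) = cubeE n f + cubeE n g := by
  unfold cubeE; rw [Finset.sum_add_distrib, add_div]

lemma cubeE_const_mul (c : ℝ) (f : (Fin n → Bool) → ℝ) :
    cubeE n (fun x => c * f x) = c * cubeE n f := by
  unfold cubeE; rw [← Finset.mul_sum, mul_div_assoc]

lemma cubeE_sum {α : Type*} (A : Finset α) (g : α → (Fin n → Bool) → ℝ) :
    cubeE n (fun x => ∑ a ∈ A, g a x) = ∑ a ∈ A, cubeE n (g a) := by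
  unfold cubeE; rw [Finset.sum_comm, Finset.sum_div]

lemma cubeE_mono {f g : (Fin n → Bool) → ℝ} (h : ∀ x, f x ≤ g x) : cubeE n f ≤ cubeE n g := by
  unfold cubeE
  have h2 : (0:ℝ) < 2^n := by positivity
  exact (div_le_div_iff_of_pos_right h2).mpr (Finset.sum_le_sum fun x _ => h x)

lemma cubeE_nonneg {f : (Fin n → Bool) → ℝ} (h : ∀ x, 0 ≤ f x) : 0 ≤ cubeE n f :=
  div_nonneg (Finset.sum_nonneg fun x _ => h x) (by positivity)

lemma cubeE_one : cubeE n (fun _ => (1:ℝ)) = 1 := by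
  unfold cubeE
  rw [Finset.sum_const, Finset.card_univ]
  simp [Fintype.card_fun]

def flip (i : Fin n) (x : Fin n → Bool) : Fin n → Bool := Function.update x i (! x i)

lemma flip_involutive (i : Fin n) : Function.Involutive (flip i) := by
  intro x; funext j
  rcases eq_or_ne j i with rfl | h
  · simp [flip]
  · simp [flip, Function.update_of_ne h]

lemma sum_flip (i : Fin n) (F : (Fin n → Bool) → ℝ) :
    ∑ x, F (flip i x) = ∑ x, F x :=
  Equiv.sum_comp (flip_involutive i).toPerm F

lemma W_flip (S : Finset (Fin n)) (i : Fin n) (x : Fin n → Bool) :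
    W n S (flip i x) = (if i ∈ S then -1 else 1) * W n S x := by
  by_cases h : i ∈ S
  · rw [if_pos h]
    unfold W
    rw [← Finset.prod_erase_mul _ _ h, ← Finset.prod_erase_mul _ _ h]
    have h1 : ∀ j ∈ S.erase i, chi (flip i x j) = chi (x j) := by
      intro j hj
      have : j ≠ i := Finset.ne_of_mem_erase hj
      simp [flip, Function.update_of_ne this]
    rw [Finset.prod_congr rfl h1]
    have : chi (flip i x i) = - chi (x i) := by simp [flip, chi_not]
    rw [this]; ring
  · rw [if_neg h, one_mul]
    unfold W
    apply Finset.prod_congr rfl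
    intro j hj
    have : j ≠ i := fun e => h (e ▸ hj)
    simp [flip, Function.update_of_ne this]

lemma sum_eq_zero_of_flip (i : Fin n) (F : (Fin n → Bool) → ℝ)
    (h : ∀ x, F (flip i x) = - F x) : ∑ x, F x = 0 := by
  have h1 : ∑ x, F x = - ∑ x, F x := by
    conv_lhs => rw [← sum_flip i F]
    rw [Finset.sum_congr rfl fun x _ => h x, Finset.sum_neg_distrib]
  linarith

lemma W_mul_self (S : Finset (Fin n)) (x : Fin n → Bool) : W n S x * W n S x = 1 := by
  unfold W; rw [← Finset.prod_mul_distrib]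
  exact Finset.prod_eq_one fun i _ => chi_mul_chi _

lemma orthonormal (S T : Finset (Fin n)) :
    cubeE n (fun x => W n S x * W n T x) = if S = T then 1 else 0 := by
  rcases eq_or_ne S T with rfl | h
  · rw [if_pos rfl, cubeE_congr (fun x => W_mul_self S x), cubeE_one]
  · rw [if_neg h]
    obtain ⟨i, hi⟩ : ∃ i, ¬ (i ∈ S ↔ i ∈ T) := by
      by_contra hc; push_neg at hc
      exact h (Finset.ext fun i => (hc i))
    have key : ∀ x, W n S (flip i x) * W n T (flip i x) = - (W n S x * W n T x) := by
      intro x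
      rw [W_flip, W_flip]
      by_cases hS : i ∈ S <;> by_cases hT : i ∈ T <;>
        simp [hS, hT] at hi ⊢ <;> ring
    unfold cubeE
    rw [sum_eq_zero_of_flip i _ key, zero_div]

lemma kernel (ρ : ℝ) (x y : Fin n → Bool) :
    ∑ S : Finset (Fin n), ρ ^ S.card * (W n S x * W n S y)
      = ∏ i, (1 + ρ * (chi (x i) * chi (y i))) := by
  have h := Finset.prod_add (fun i => ρ * (chi (x i) * chi (y i))) (fun _ => (1:ℝ)) Finset.univ
  rw [Finset.powerset_univ] at h
  calc ∑ S : Finset (Fin n), ρ ^ S.card * (W n S x * W n S y)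
      = ∑ S : Finset (Fin n), (∏ i ∈ S, ρ * (chi (x i) * chi (y i))) * ∏ _i ∈ Finset.univ \ S, (1:ℝ) := by
        apply Finset.sum_congr rfl; intro S _
        rw [Finset.prod_const_one, mul_one]
        unfold W
        rw [Finset.prod_mul_distrib, Finset.prod_mul_distrib, Finset.prod_const]
    _ = ∏ i, (ρ * (chi (x i) * chi (y i)) + 1) := h.symm
    _ = ∏ i, (1 + ρ * (chi (x i) * chi (y i))) := Finset.prod_congr rfl fun i _ => add_comm _ _

lemma chi_mul_chi_eq (b c : Bool) : chi b * chi c = if b = c then 1 else -1 := by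
  cases b <;> cases c <;> norm_num [chi]

lemma delta (x y : Fin n → Bool) :
    ∑ S : Finset (Fin n), W n S x * W n S y = if x = y then (2:ℝ)^n else 0 := by
  have h := kernel 1 x y
  simp only [one_pow, one_mul] at h
  rw [h]
  rcases eq_or_ne x y with rfl | hne
  · rw [if_pos rfl]
    have : ∀ i : Fin n, (1 + (chi (x i) * chi (x i))) = 2 := by
      intro i; rw [chi_mul_chi]; norm_num
    rw [Finset.prod_congr rfl fun i _ => this i, Finset.prod_const, Finset.card_univ,
      Fintype.card_fin]
  · rw [if_neg hne]
    obtain ⟨i, hi⟩ : ∃ i, x i ≠ y i := by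
      by_contra hc; push_neg at hc; exact hne (funext hc)
    apply Finset.prod_eq_zero (Finset.mem_univ i)
    rw [chi_mul_chi_eq, if_neg hi]; norm_num

lemma inversion (f : (Fin n → Bool) → ℝ) (x : Fin n → Bool) :
    ∑ S : Finset (Fin n), cubeCoeff n f S * W n S x = f x := by
  have expand : ∀ S : Finset (Fin n), cubeCoeff n f S * W n S x
      = (∑ y, f y * W n S y * W n S x) / 2 ^ n := by
    intro S
    rw [coeff_def]; unfold cubeE
    rw [div_mul_eq_mul_div, Finset.sum_mul]
  rw [Finset.sum_congr rfl fun S _ => expand S, ← Finset.sum_div, Finset.sum_comm]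
  have : ∀ y, ∑ S : Finset (Fin n), f y * W n S y * W n S x
      = f y * ∑ S : Finset (Fin n), W n S y * W n S x := by
    intro y; rw [Finset.mul_sum]; exact Finset.sum_congr rfl fun S _ => by ring
  rw [Finset.sum_congr rfl fun y _ => this y]
  have : ∀ y, f y * (∑ S : Finset (Fin n), W n S y * W n S x)
      = if y = x then f y * 2^n else 0 := by
    intro y; rw [delta]
    rcases eq_or_ne y x with rfl | h
    · simp
    · simp [h]
  rw [Finset.sum_congr rfl fun y _ => this y, Finset.sum_ite_eq' Finset.univ x
    (fun y => f y * 2^n)]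
  simp only [Finset.mem_univ, if_true]
  field_simp

lemma plancherel (f g : (Fin n → Bool) → ℝ) :
    cubeE n (fun x => f x * g x) = ∑ S : Finset (Fin n), cubeCoeff n f S * cubeCoeff n g S := by
  have : ∀ x, f x * g x = (∑ S : Finset (Fin n), cubeCoeff n f S * W n S x) * g x := by
    intro x; rw [inversion]
  rw [cubeE_congr this]
  have : ∀ x, (∑ S : Finset (Fin n), cubeCoeff n f S * W n S x) * g x
      = ∑ S : Finset (Fin n), cubeCoeff n f S * (g x * W n S x) := by
    intro x; rw [Finset.sum_mul]; exact Finset.sum_congr rfl fun S _ => by ring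
  rw [cubeE_congr this, cubeE_sum]
  exact Finset.sum_congr rfl fun S _ => by
    rw [cubeE_const_mul, ← coeff_def]

lemma parseval (f : (Fin n → Bool) → ℝ) :
    cubeE n (fun x => f x ^ 2) = ∑ S : Finset (Fin n), cubeCoeff n f S ^ 2 :=
  calc cubeE n (fun x => f x ^ 2) = cubeE n (fun x => f x * f x) :=
        cubeE_congr fun x => sq (f x)
    _ = ∑ S : Finset (Fin n), cubeCoeff n f S * cubeCoeff n f S := plancherel f f
    _ = ∑ S : Finset (Fin n), cubeCoeff n f S ^ 2 :=
        Finset.sum_congr rfl fun S _ => (sq _).symm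

lemma coeff_expansion (c : Finset (Fin n) → ℝ) (S : Finset (Fin n)) :
    cubeCoeff n (fun x => ∑ T : Finset (Fin n), c T * W n T x) S = c S := by
  rw [coeff_def]
  have : ∀ x, (∑ T : Finset (Fin n), c T * W n T x) * W n S x
      = ∑ T : Finset (Fin n), c T * (W n T x * W n S x) := by
    intro x; rw [Finset.sum_mul]; exact Finset.sum_congr rfl fun T _ => by ring
  rw [cubeE_congr this, cubeE_sum]
  have : ∀ T : Finset (Fin n), cubeE n (fun x => c T * (W n T x * W n S x))
      = if T = S then c T else 0 := by
    intro T
    rw [cubeE_const_mul, orthonormal]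
    rcases eq_or_ne T S with rfl | h
    · simp
    · simp [h]
  rw [Finset.sum_congr rfl fun T _ => this T, Finset.sum_ite_eq' Finset.univ S c]
  simp

lemma coeff_D (f : (Fin n → Bool) → ℝ) (i : Fin n) (S : Finset (Fin n)) :
    cubeCoeff n (cubeD n i f) S = if i ∈ S then cubeCoeff n f S else 0 := by
  have h1 : ∑ x, f (flip i x) * W n S x = ∑ x, f x * W n S (flip i x) := by
    have h := sum_flip i (fun x => f x * W n S (flip i x))
    have h' : ∀ x, f (flip i x) * W n S (flip i (flip i x)) = f (flip i x) * W n S x := by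
      intro x; rw [flip_involutive i x]
    rw [Finset.sum_congr rfl fun x _ => h' x] at h
    exact h
  have h2 : ∑ x, f x * W n S (flip i x)
      = (if i ∈ S then (-1:ℝ) else 1) * ∑ x, f x * W n S x := by
    rw [Finset.mul_sum]
    exact Finset.sum_congr rfl fun x _ => by rw [W_flip]; ring
  have step : ∀ x, cubeD n i f x * W n S x
      = (f x * W n S x) / 2 - (f (flip i x) * W n S x) / 2 := by
    intro x; unfold cubeD flip; ring
  rw [coeff_def, cubeE_congr step]
  unfold cubeE
  rw [Finset.sum_sub_distrib, ← Finset.sum_div, ← Finset.sum_div, h1, h2, coeff_def]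
  unfold cubeE
  by_cases h : i ∈ S
  · rw [if_pos h, if_pos h]; ring
  · rw [if_neg h, if_neg h]; ring

noncomputable def cubeT (ρ : ℝ) (f : (Fin n → Bool) → ℝ) : (Fin n → Bool) → ℝ :=
  fun x => cubeE n fun y => f y * ∏ i, (1 + ρ * (chi (x i) * chi (y i)))

lemma cubeT_eq_sum (ρ : ℝ) (f : (Fin n → Bool) → ℝ) (x : Fin n → Bool) :
    cubeT ρ f x = ∑ S : Finset (Fin n), ρ ^ S.card * cubeCoeff n f S * W n S x := by
  unfold cubeT
  have h1 : ∀ y, f y * ∏ i, (1 + ρ * (chi (x i) * chi (y i)))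
      = ∑ S : Finset (Fin n), ρ ^ S.card * (f y * W n S y) * W n S x := by
    intro y
    rw [← kernel ρ x y, Finset.mul_sum]
    exact Finset.sum_congr rfl fun S _ => by
      unfold W; rw [← Finset.prod_mul_distrib]
      rw [Finset.prod_congr rfl fun i _ => mul_comm (chi (x i)) (chi (y i)), Finset.prod_mul_distrib]
      ring
  rw [cubeE_congr h1, cubeE_sum]
  exact Finset.sum_congr rfl fun S _ => by
    rw [show (fun y => ρ ^ S.card * (f y * W n S y) * W n S x)
        = (fun y => (ρ ^ S.card * W n S x) * (f y * W n S y)) from funext fun y => by ring,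
      cubeE_const_mul, ← coeff_def]
    ring

lemma coeff_T (ρ : ℝ) (f : (Fin n → Bool) → ℝ) (S : Finset (Fin n)) :
    cubeCoeff n (cubeT ρ f) S = ρ ^ S.card * cubeCoeff n f S := by
  have : cubeT ρ f = fun x => ∑ T : Finset (Fin n), (ρ ^ T.card * cubeCoeff n f T) * W n T x :=
    funext fun x => cubeT_eq_sum ρ f x
  rw [this, coeff_expansion]

lemma energy_T (ρ : ℝ) (f : (Fin n → Bool) → ℝ) :
    cubeE n (fun x => cubeT ρ f x ^ 2)
      = ∑ S : Finset (Fin n), ρ ^ (2 * S.card) * cubeCoeff n f S ^ 2 := by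
  rw [parseval]
  exact Finset.sum_congr rfl fun S _ => by
    rw [coeff_T, mul_pow, ← pow_mul, mul_comm S.card 2]

section TwoPoint

lemma amgm_rpow {u v p : ℝ} (hu : 0 < u) (hv : 0 < v) (huv : u * v ≤ 1) (hp : p ≤ 0) :
    (2:ℝ) ≤ u ^ p + v ^ p := by
  have hA : (u ^ (p/2)) ^ 2 = u ^ p := by
    rw [← Real.rpow_natCast (u ^ (p/2)) 2, ← Real.rpow_mul hu.le]
    norm_num
  have hB : (v ^ (p/2)) ^ 2 = v ^ p := by
    rw [← Real.rpow_natCast (v ^ (p/2)) 2, ← Real.rpow_mul hv.le]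
    norm_num
  have hAB : u ^ (p/2) * v ^ (p/2) = (u*v) ^ (p/2) := (Real.mul_rpow hu.le hv.le).symm
  have h1 : (1:ℝ) ≤ (u*v) ^ (p/2) :=
    Real.one_le_rpow_of_pos_of_le_one_of_nonpos (by positivity) huv (by linarith)
  nlinarith [sq_nonneg (u ^ (p/2) - v ^ (p/2))]

lemma bernoulli_le {p s : ℝ} (hp0 : 0 < p) (hp1 : p ≤ 1) (hs : 0 ≤ s) :
    (1 + s) ^ p ≤ 1 + p * s := by
  have h1 : (1:ℝ) ≤ 1/p := by rw [le_div_iff₀ hp0]; linarith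
  have h2 : 1 + s ≤ (1 + p*s) ^ (1/p) := by
    have h := one_add_mul_self_le_rpow_one_add (s := p*s) (by nlinarith) h1
    calc 1 + s = 1 + (1/p) * (p * s) := by field_simp
      _ ≤ (1 + p*s) ^ (1/p) := h
  calc (1+s)^p ≤ ((1 + p*s)^(1/p))^p := Real.rpow_le_rpow (by linarith) h2 hp0.le
    _ = (1+p*s)^((1/p)*p) := (Real.rpow_mul (by nlinarith) _ _).symm
    _ = 1 + p*s := by rw [one_div, inv_mul_cancel₀ hp0.ne', Real.rpow_one]

lemma aux_h1 {q : ℝ} (hq1 : 1 ≤ q) (hq2 : q ≤ 2) {t : ℝ} (ht0 : 0 ≤ t) (ht1 : t < 1) :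
    2*(q-1)*t ≤ (1+t)^(q-1) - (1-t)^(q-1) := by
  set g : ℝ → ℝ := fun s => (1+s)^(q-1) - (1-s)^(q-1) - 2*(q-1)*s with hg
  have hgc : Continuous g := by
    apply Continuous.sub
    apply Continuous.sub
    · exact Continuous.rpow_const (by continuity) (fun x => Or.inr (by linarith))
    · exact Continuous.rpow_const (by continuity) (fun x => Or.inr (by linarith))
    · continuity
  have mono : MonotoneOn g (Set.Icc 0 t) := by
    apply monotoneOn_of_hasDerivWithinAt_nonneg (convex_Icc 0 t) hgc.continuousOn
      (f' := fun s => ((q-1)*(1+s)^(q-2) + (q-1)*(1-s)^(q-2)) - 2*(q-1))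
    · intro s hs
      rw [interior_Icc] at hs
      have hs0 : 0 < s := hs.1
      have hs1 : s < 1 := lt_of_lt_of_le hs.2 ht1.le
      have d1 : HasDerivAt (fun s : ℝ => (1+s)^(q-1)) ((q-1)*(1+s)^(q-2)) s := by
        have h0 : HasDerivAt (fun s : ℝ => 1+s) 1 s := (hasDerivAt_id s).const_add 1
        have := h0.rpow_const (p := q-1) (Or.inl (ne_of_gt (by linarith : (0:ℝ) < 1+s)))
        convert this using 1
        ring_nf
      have d2 : HasDerivAt (fun s : ℝ => (1-s)^(q-1)) (-((q-1)*(1-s)^(q-2))) s := by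
        have h0 : HasDerivAt (fun s : ℝ => 1-s) (-1) s := (hasDerivAt_id s).const_sub 1
        have := h0.rpow_const (p := q-1) (Or.inl (ne_of_gt (by linarith : (0:ℝ) < 1-s)))
        convert this using 1
        ring_nf
      have d3 : HasDerivAt (fun s : ℝ => 2*(q-1)*s) (2*(q-1)) s := by
        simpa using (hasDerivAt_id s).const_mul (2*(q-1))
      have := (d1.sub d2).sub d3
      exact (this.congr_deriv (by ring)).hasDerivWithinAt
    · intro s hs
      rw [interior_Icc] at hs
      have hs0 : 0 < s := hs.1
      have hs1 : s < 1 := lt_of_lt_of_le hs.2 ht1.le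
      have hkey : (2:ℝ) ≤ (1+s)^(q-2) + (1-s)^(q-2) := by
        apply amgm_rpow (by linarith) (by linarith) (by nlinarith) (by linarith)
      have hq1' : (0:ℝ) ≤ q - 1 := by linarith
      nlinarith [mul_le_mul_of_nonneg_left hkey hq1']
  have h0t : (0:ℝ) ∈ Set.Icc (0:ℝ) t := ⟨le_refl _, ht0⟩
  have htt : t ∈ Set.Icc (0:ℝ) t := ⟨ht0, le_refl _⟩
  have := mono h0t htt ht0
  have hg0 : g 0 = 0 := by simp [hg, Real.one_rpow]
  rw [hg0] at this
  simp only [hg] at this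
  linarith

lemma key_ineq {q : ℝ} (hq1 : 1 ≤ q) (hq2 : q ≤ 2) {x : ℝ} (hx0 : 0 ≤ x) (hx1 : x ≤ 1) :
    2 + q*(q-1)*x^2 ≤ (1+x)^q + (1-x)^q := by
  set g : ℝ → ℝ := fun s => ((1+s)^q + (1-s)^q) - q*(q-1)*s^2 with hg
  have hgc : Continuous g := by
    apply Continuous.sub
    apply Continuous.add
    · exact Continuous.rpow_const (by continuity) (fun x => Or.inr (by linarith))
    · exact Continuous.rpow_const (by continuity) (fun x => Or.inr (by linarith))
    · continuity
  have mono : MonotoneOn g (Set.Icc 0 1) := by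
    apply monotoneOn_of_hasDerivWithinAt_nonneg (convex_Icc 0 1) hgc.continuousOn
      (f' := fun s => (q*(1+s)^(q-1) - q*(1-s)^(q-1)) - 2*q*(q-1)*s)
    · intro s hs
      rw [interior_Icc] at hs
      have d1 : HasDerivAt (fun s : ℝ => (1+s)^q) (q*(1+s)^(q-1)) s := by
        have h0 : HasDerivAt (fun s : ℝ => 1+s) 1 s := (hasDerivAt_id s).const_add 1
        have := h0.rpow_const (p := q) (Or.inr hq1)
        convert this using 1
        ring
      have d2 : HasDerivAt (fun s : ℝ => (1-s)^q) (-(q*(1-s)^(q-1))) s := by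
        have h0 : HasDerivAt (fun s : ℝ => 1-s) (-1) s := (hasDerivAt_id s).const_sub 1
        have := h0.rpow_const (p := q) (Or.inr hq1)
        convert this using 1
        ring
      have d3 : HasDerivAt (fun s : ℝ => q*(q-1)*s^2) (q*(q-1)*(2*s)) s := by
        have := (hasDerivAt_pow 2 s).const_mul (q*(q-1))
        exact this.congr_deriv (by norm_num)
      have := (d1.add d2).sub d3
      exact (this.congr_deriv (by ring)).hasDerivWithinAt
    · intro s hs
      rw [interior_Icc] at hs
      have h := aux_h1 hq1 hq2 hs.1.le hs.2
      have hq0 : (0:ℝ) ≤ q := by linarith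
      nlinarith [mul_le_mul_of_nonneg_left h hq0]
  have h01 : (0:ℝ) ∈ Set.Icc (0:ℝ) 1 := ⟨le_refl _, by norm_num⟩
  have hx01 : x ∈ Set.Icc (0:ℝ) 1 := ⟨hx0, hx1⟩
  have := mono h01 hx01 hx0
  have hg0 : g 0 = 2 := by norm_num [hg, Real.one_rpow]
  rw [hg0] at this
  simp only [hg] at this
  linarith

lemma tp_core {q : ℝ} (hq1 : 1 ≤ q) (hq2 : q ≤ 2) {x : ℝ} (hx0 : 0 ≤ x) (hx1 : x ≤ 1) :
    (1 + (q-1)*x^2) ^ (q/2) ≤ ((1+x)^q + (1-x)^q)/2 := by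
  have hb := bernoulli_le (p := q/2) (by linarith) (by linarith) (s := (q-1)*x^2) (by nlinarith)
  have hk := key_ineq hq1 hq2 hx0 hx1
  calc (1 + (q-1)*x^2)^(q/2) ≤ 1 + (q/2)*((q-1)*x^2) := hb
    _ ≤ ((1+x)^q + (1-x)^q)/2 := by nlinarith

lemma tp_norm {q : ℝ} (hq1 : 1 ≤ q) (hq2 : q ≤ 2) {x : ℝ} (hx0 : 0 ≤ x) (hx1 : x ≤ 1) :
    1 + (q-1)*x^2 ≤ (((1+x)^q + (1-x)^q)/2) ^ (2/q) := by
  have h0 : (0:ℝ) < q := by linarith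
  have hL : (0:ℝ) ≤ 1 + (q-1)*x^2 := by nlinarith
  have h := Real.rpow_le_rpow (by positivity) (tp_core hq1 hq2 hx0 hx1)
    (by positivity : (0:ℝ) ≤ 2/q)
  rwa [← Real.rpow_mul hL, show (q/2)*(2/q) = 1 by field_simp, Real.rpow_one] at h

lemma tp_aux {ρ : ℝ} (h0 : 0 ≤ ρ) (h1 : ρ ≤ 1) (a b : ℝ) (hba : |b| ≤ |a|) :
    a^2 + ρ^2*b^2 ≤ ((|a+b|^(1+ρ^2) + |a-b|^(1+ρ^2))/2)^(2/(1+ρ^2)) := by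
  set q : ℝ := 1 + ρ^2 with hq
  have hq1 : 1 ≤ q := by nlinarith [sq_nonneg ρ]
  have hq2 : q ≤ 2 := by nlinarith
  have hq0 : (0:ℝ) < q := by linarith
  have habs : |a+b|^q + |a-b|^q = (|a|+|b|)^q + (|a|-|b|)^q := by
    rcases le_total 0 a with ha | ha <;> rcases le_total 0 b with hb | hb
    · have hba' : b ≤ a := by rwa [abs_of_nonneg ha, abs_of_nonneg hb] at hba
      rw [abs_of_nonneg ha, abs_of_nonneg hb, abs_of_nonneg (by linarith : (0:ℝ) ≤ a+b),
        abs_of_nonneg (by linarith : (0:ℝ) ≤ a - b)]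
    · have hba' : -b ≤ a := by rwa [abs_of_nonneg ha, abs_of_nonpos hb] at hba
      rw [abs_of_nonneg ha, abs_of_nonpos hb, abs_of_nonneg (by linarith : (0:ℝ) ≤ a+b),
        abs_of_nonneg (by linarith : (0:ℝ) ≤ a - b),
        show a + b = a - -b by ring, show a - b = a + -b by ring, add_comm ((a - -b)^q)]
    · have hba' : b ≤ -a := by rwa [abs_of_nonpos ha, abs_of_nonneg hb] at hba
      rw [abs_of_nonpos ha, abs_of_nonneg hb, abs_of_nonpos (by linarith : a+b ≤ 0),
        abs_of_nonpos (by linarith : a - b ≤ 0),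
        show -(a+b) = -a - b by ring, show -(a-b) = -a + b by ring, add_comm ((-a - b)^q)]
    · have hba' : -b ≤ -a := by rwa [abs_of_nonpos ha, abs_of_nonpos hb] at hba
      rw [abs_of_nonpos ha, abs_of_nonpos hb, abs_of_nonpos (by linarith : a+b ≤ 0),
        abs_of_nonpos (by linarith : a - b ≤ 0),
        show -(a+b) = -a + -b by ring, show -(a-b) = -a - -b by ring]
  rcases eq_or_lt_of_le (abs_nonneg a) with ha0 | ha0
  · have ha : a = 0 := by rw [← abs_eq_zero]; exact ha0.symm
    have hb : b = 0 := by
      rw [← abs_eq_zero]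
      have := hba.trans (le_of_eq ha0.symm)
      linarith [abs_nonneg b]
    subst ha; subst hb
    simp only [add_zero, abs_zero, sub_zero]
    rw [Real.zero_rpow hq0.ne']
    norm_num
    positivity
  · set x : ℝ := |b|/|a| with hx
    have hx0 : 0 ≤ x := by positivity
    have hx1 : x ≤ 1 := by rw [div_le_one ha0]; exact hba
    have hnorm := tp_norm hq1 hq2 hx0 hx1
    have hbx : |b| = x * |a| := by rw [hx, div_mul_cancel₀ _ ha0.ne']
    have e1 : |a| + |b| = |a| * (1+x) := by rw [hbx]; ring
    have e2 : |a| - |b| = |a| * (1-x) := by rw [hbx]; ring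
    have e3 : (|a| * (1+x))^q = |a|^q * (1+x)^q := Real.mul_rpow (abs_nonneg a) (by linarith)
    have e4 : (|a| * (1-x))^q = |a|^q * (1-x)^q := Real.mul_rpow (abs_nonneg a) (by linarith)
    have eavg : (|a+b|^q + |a-b|^q)/2 = |a|^q * (((1+x)^q + (1-x)^q)/2) := by
      rw [habs, e1, e2, e3, e4]; ring
    have hsplit : (|a|^q * (((1+x)^q + (1-x)^q)/2))^(2/q)
        = (|a|^q)^(2/q) * ((((1+x)^q + (1-x)^q)/2))^(2/q) := by
      apply Real.mul_rpow (Real.rpow_nonneg (abs_nonneg a) q)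
      have : (0:ℝ) ≤ (1+x)^q := Real.rpow_nonneg (by linarith) q
      have : (0:ℝ) ≤ (1-x)^q := Real.rpow_nonneg (by linarith) q
      positivity
    have hpow : (|a|^q)^(2/q) = a^2 := by
      rw [← Real.rpow_mul (abs_nonneg a), show q*(2/q) = 2 by field_simp,
        show (2:ℝ) = ((2:ℕ):ℝ) by norm_num, Real.rpow_natCast, sq_abs]
    have hb2 : b^2 = x^2 * a^2 := by
      calc b^2 = |b|^2 := (sq_abs b).symm
        _ = (x*|a|)^2 := by rw [hbx]
        _ = x^2 * a^2 := by rw [mul_pow, sq_abs]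
    calc a^2 + ρ^2*b^2 = a^2 * (1 + (q-1)*x^2) := by rw [hb2]; simp only [hq]; ring
      _ ≤ a^2 * ((((1+x)^q + (1-x)^q)/2))^(2/q) :=
          mul_le_mul_of_nonneg_left hnorm (sq_nonneg a)
      _ = ((|a+b|^q + |a-b|^q)/2)^(2/q) := by rw [eavg, hsplit, hpow]

lemma tp {ρ : ℝ} (h0 : 0 ≤ ρ) (h1 : ρ ≤ 1) (a b : ℝ) :
    a^2 + ρ^2*b^2 ≤ ((|a+b|^(1+ρ^2) + |a-b|^(1+ρ^2))/2)^(2/(1+ρ^2)) := by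
  rcases le_total |b| |a| with hba | hab
  · exact tp_aux h0 h1 a b hba
  · have h := tp_aux h0 h1 b a hab
    have e1 : |b+a| = |a+b| := by rw [add_comm]
    have e2 : |b-a| = |a-b| := abs_sub_comm b a
    rw [e1, e2] at h
    have haa : a^2 ≤ b^2 := by
      have h2 := mul_self_le_mul_self (abs_nonneg a) hab
      nlinarith [abs_mul_abs_self a, abs_mul_abs_self b]
    have hr2 : ρ^2 ≤ 1 := by nlinarith
    nlinarith [h]

end TwoPoint

section Tensor

lemma cubeE_split (F : (Fin (n+1) → Bool) → ℝ) :
    cubeE (n+1) F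
      = (cubeE n (fun y => F (Fin.cons false y)) + cubeE n (fun y => F (Fin.cons true y)))/2 := by
  unfold cubeE
  have h := Equiv.sum_comp (Fin.consEquiv (fun _ : Fin (n+1) => Bool)) F
  rw [← h, Fintype.sum_prod_type, Fintype.sum_bool]
  have e : ∀ (b : Bool) (y : Fin n → Bool),
      F ((Fin.consEquiv (fun _ : Fin (n+1) => Bool)) (b, y)) = F (Fin.cons b y) := fun _ _ => rfl
  rw [Finset.sum_congr rfl fun y _ => e true y, Finset.sum_congr rfl fun y _ => e false y]
  rw [pow_succ]
  ring

lemma cubeT_split (ρ : ℝ) (f : (Fin (n+1) → Bool) → ℝ) (b : Bool) (y : Fin n → Bool) :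
    cubeT ρ f (Fin.cons b y)
      = ((1 + ρ * (chi b * chi false))/2) * cubeT ρ (fun z => f (Fin.cons false z)) y
      + ((1 + ρ * (chi b * chi true))/2) * cubeT ρ (fun z => f (Fin.cons true z)) y := by
  have hprod : ∀ (c : Bool) (z : Fin n → Bool),
      (∏ i : Fin (n+1), (1 + ρ * (chi ((Fin.cons b y : Fin (n+1) → Bool) i) * chi ((Fin.cons c z : Fin (n+1) → Bool) i))))
      = (1 + ρ * (chi b * chi c)) * ∏ i : Fin n, (1 + ρ * (chi (y i) * chi (z i))) := by
    intro c z
    rw [Fin.prod_univ_succ]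
    simp only [Fin.cons_zero, Fin.cons_succ]
  unfold cubeT
  rw [cubeE_split]
  have h1 : ∀ c : Bool, cubeE n (fun z =>
        f (Fin.cons c z) * ∏ i : Fin (n+1), (1 + ρ * (chi ((Fin.cons b y : Fin (n+1) → Bool) i) * chi ((Fin.cons c z : Fin (n+1) → Bool) i))))
      = (1 + ρ * (chi b * chi c)) *
        cubeE n (fun z => f (Fin.cons c z) * ∏ i : Fin n, (1 + ρ * (chi (y i) * chi (z i)))) := by
    intro c
    rw [← cubeE_const_mul]
    apply cubeE_congr
    intro z
    rw [hprod c z]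
    ring
  rw [h1 false, h1 true]
  ring

lemma mink (u v : (Fin n → Bool) → ℝ) (hu : ∀ x, 0 ≤ u x) (hv : ∀ x, 0 ≤ v x)
    {r : ℝ} (hr : 1 ≤ r) :
    cubeE n (fun x => ((u x + v x)/2)^r)
      ≤ (((cubeE n (fun x => u x ^ r))^(1/r) + (cubeE n (fun x => v x ^ r))^(1/r))/2)^r := by
  have hr0 : (0:ℝ) < r := by linarith
  set su := ∑ x, u x ^ r with hsu
  set sv := ∑ x, v x ^ r with hsv
  have hsu0 : 0 ≤ su := Finset.sum_nonneg fun x _ => Real.rpow_nonneg (hu x) r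
  have hsv0 : 0 ≤ sv := Finset.sum_nonneg fun x _ => Real.rpow_nonneg (hv x) r
  have step1 : (∑ x, ((u x + v x)/2)^r)^(1/r) ≤ (su^(1/r) + sv^(1/r))/2 := by
    have h := Real.Lp_add_le (s := Finset.univ) (fun x => u x / 2) (fun x => v x / 2) hr
    have e0 : ∀ x, |u x / 2 + v x / 2| ^ r = ((u x + v x)/2)^r := by
      intro x
      rw [abs_of_nonneg (by have := hu x; have := hv x; linarith)]
      ring_nf
    have ehalf : ∀ (w : (Fin n → Bool) → ℝ), (∀ x, 0 ≤ w x) →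
        (∑ x, |w x / 2| ^ r)^(1/r) = (∑ x, w x ^ r)^(1/r) / 2 := by
      intro w hw
      have e1 : ∀ x, |w x / 2| ^ r = w x ^ r * ((1:ℝ)/2)^r := by
        intro x
        rw [abs_of_nonneg (by have := hw x; linarith), div_eq_mul_one_div,
          Real.mul_rpow (hw x) (by norm_num)]
      rw [Finset.sum_congr rfl fun x _ => e1 x, ← Finset.sum_mul,
        Real.mul_rpow (Finset.sum_nonneg fun x _ => Real.rpow_nonneg (hw x) r)
          (Real.rpow_nonneg (by norm_num) r),
        ← Real.rpow_mul (by norm_num : (0:ℝ) ≤ 1/2), mul_one_div, div_self hr0.ne',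
        Real.rpow_one]
      ring
    calc (∑ x, ((u x + v x)/2)^r)^(1/r)
        = (∑ x, |u x / 2 + v x / 2| ^ r)^(1/r) := by
          rw [Finset.sum_congr rfl fun x _ => (e0 x).symm]
      _ ≤ (∑ x, |u x / 2|^r)^(1/r) + (∑ x, |v x / 2|^r)^(1/r) := by simpa using h
      _ = (su^(1/r) + sv^(1/r))/2 := by rw [ehalf u hu, ehalf v hv]; ring
  have step2 : ∑ x, ((u x + v x)/2)^r ≤ ((su^(1/r) + sv^(1/r))/2)^r := by
    have hL0 : 0 ≤ ∑ x, ((u x + v x)/2)^r :=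
      Finset.sum_nonneg fun x _ => Real.rpow_nonneg (by have := hu x; have := hv x; linarith) r
    have h := Real.rpow_le_rpow (Real.rpow_nonneg hL0 (1/r)) step1 hr0.le
    rwa [← Real.rpow_mul hL0, one_div_mul_cancel hr0.ne', Real.rpow_one] at h
  -- now divide by N
  unfold cubeE
  set N : ℝ := (2:ℝ)^n with hN
  have hN0 : (0:ℝ) < N := by positivity
  have eR : ((su/N)^(1/r) + (sv/N)^(1/r))/2 = ((su^(1/r) + sv^(1/r))/2) * (N^(1/r))⁻¹ := by
    rw [Real.div_rpow hsu0 hN0.le, Real.div_rpow hsv0 hN0.le]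
    ring
  rw [eR, Real.mul_rpow (by positivity) (by positivity)]
  have eN : ((N^(1/r))⁻¹)^r = N⁻¹ := by
    rw [Real.inv_rpow (Real.rpow_nonneg hN0.le _), ← Real.rpow_mul hN0.le,
      one_div_mul_cancel hr0.ne', Real.rpow_one]
  rw [eN, div_eq_mul_inv]
  exact mul_le_mul_of_nonneg_right step2 (inv_nonneg.2 hN0.le)

lemma hc : ∀ (n : ℕ) {ρ : ℝ}, 0 ≤ ρ → ρ ≤ 1 → ∀ (f : (Fin n → Bool) → ℝ),
    cubeE n (fun x => cubeT ρ f x ^ 2)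
      ≤ (cubeE n (fun x => |f x| ^ (1+ρ^2))) ^ (2/(1+ρ^2)) := by
  intro n
  induction n with
  | zero =>
      intro ρ h0 h1 f
      have hq0 : (0:ℝ) < 1+ρ^2 := by positivity
      have e0 : ∀ (g : (Fin 0 → Bool) → ℝ) (x : Fin 0 → Bool), cubeE 0 g = g x := by
        intro g x
        unfold cubeE
        rw [Finset.sum_congr rfl fun y _ => congrArg g (Subsingleton.elim y x),
          Finset.sum_const, Finset.card_univ]
        simp [Fintype.card_fun]
      have eT : cubeT ρ f default = f default := by
        unfold cubeT
        rw [e0 _ default]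
        simp
      rw [e0 _ default, e0 _ default, eT, ← Real.rpow_mul (abs_nonneg (f default)),
        show (1+ρ^2)*(2/(1+ρ^2)) = 2 by field_simp,
        show (2:ℝ) = ((2:ℕ):ℝ) by norm_num, Real.rpow_natCast, sq_abs]
  | succ n ih =>
      intro ρ h0 h1 f
      have hq1 : 1 ≤ 1+ρ^2 := by nlinarith [sq_nonneg ρ]
      have hq2 : 1+ρ^2 ≤ 2 := by nlinarith
      have hq0 : (0:ℝ) < 1+ρ^2 := by positivity
      set q : ℝ := 1 + ρ^2 with hq
      set f0 : (Fin n → Bool) → ℝ := fun z => f (Fin.cons false z) with hf0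
      set f1 : (Fin n → Bool) → ℝ := fun z => f (Fin.cons true z) with hf1
      set G0 : (Fin n → Bool) → ℝ := cubeT ρ f0 with hG0
      set G1 : (Fin n → Bool) → ℝ := cubeT ρ f1 with hG1
      have hTb : ∀ (b : Bool) (y : Fin n → Bool),
          cubeT ρ f (Fin.cons b y)
            = (G0 y + G1 y)/2 + ρ * chi b * ((G1 y - G0 y)/2) := by
        intro b y
        rw [cubeT_split, hG0, hG1, hf0, hf1]
        cases b <;> simp only [chi, if_true, if_false, Bool.false_eq_true] <;> ring
      have hE1 : cubeE (n+1) (fun x => cubeT ρ f x ^ 2)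
          = cubeE n (fun y => ((G0 y + G1 y)/2)^2 + ρ^2 * ((G1 y - G0 y)/2)^2) := by
        rw [cubeE_split]
        have e1 : cubeE n (fun y => cubeT ρ f (Fin.cons false y) ^ 2)
            = cubeE n (fun y => ((G0 y + G1 y)/2 - ρ * ((G1 y - G0 y)/2))^2) :=
          cubeE_congr fun y => by
            rw [hTb]
            simp only [chi, Bool.false_eq_true, if_false]
            ring
        have e2 : cubeE n (fun y => cubeT ρ f (Fin.cons true y) ^ 2)
            = cubeE n (fun y => ((G0 y + G1 y)/2 + ρ * ((G1 y - G0 y)/2))^2) :=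
          cubeE_congr fun y => by
            rw [hTb]
            simp only [chi, if_true]
            ring
        rw [e1, e2]
        rw [← cubeE_add]
        rw [show ∀ (A : ℝ), A / 2 = (1/2) * A from fun A => by ring, ← cubeE_const_mul]
        apply cubeE_congr
        intro y
        ring
      have hE2 : ∀ y, ((G0 y + G1 y)/2)^2 + ρ^2*((G1 y - G0 y)/2)^2
          ≤ ((|G0 y|^q + |G1 y|^q)/2)^(2/q) := by
        intro y
        have h := tp h0 h1 ((G0 y + G1 y)/2) ((G1 y - G0 y)/2)
        rw [show (G0 y + G1 y)/2 + (G1 y - G0 y)/2 = G1 y by ring,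
          show (G0 y + G1 y)/2 - (G1 y - G0 y)/2 = G0 y by ring, ← hq,
          add_comm (|G1 y| ^ q)] at h
        exact h
      have hrineq : 1 ≤ 2/q := by rw [le_div_iff₀ hq0]; linarith
      have hmink := mink (fun y => |G0 y|^q) (fun y => |G1 y|^q)
        (fun y => Real.rpow_nonneg (abs_nonneg _) q)
        (fun y => Real.rpow_nonneg (abs_nonneg _) q) hrineq
      have ecol : ∀ (G : (Fin n → Bool) → ℝ),
          cubeE n (fun y => (|G y|^q)^(2/q)) = cubeE n (fun y => G y^2) := by
        intro G; apply cubeE_congr; intro y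
        rw [← Real.rpow_mul (abs_nonneg _), show q*(2/q) = 2 by field_simp,
          show (2:ℝ) = ((2:ℕ):ℝ) by norm_num, Real.rpow_natCast, sq_abs]
      rw [ecol G0, ecol G1, show 1/(2/q) = q/2 by field_simp] at hmink
      have hih0 : cubeE n (fun y => G0 y^2) ≤ (cubeE n (fun y => |f0 y|^q))^(2/q) := ih h0 h1 f0
      have hih1 : cubeE n (fun y => G1 y^2) ≤ (cubeE n (fun y => |f1 y|^q))^(2/q) := ih h0 h1 f1
      have hM0 : 0 ≤ cubeE n (fun y => |f0 y|^q) :=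
        cubeE_nonneg fun y => Real.rpow_nonneg (abs_nonneg _) q
      have hM1 : 0 ≤ cubeE n (fun y => |f1 y|^q) :=
        cubeE_nonneg fun y => Real.rpow_nonneg (abs_nonneg _) q
      have h90 : (cubeE n (fun y => G0 y^2))^(q/2) ≤ cubeE n (fun y => |f0 y|^q) := by
        have h := Real.rpow_le_rpow (cubeE_nonneg fun y => sq_nonneg _) hih0
          (by positivity : (0:ℝ) ≤ q/2)
        rwa [← Real.rpow_mul hM0, show (2/q)*(q/2) = 1 by field_simp, Real.rpow_one] at h
      have h91 : (cubeE n (fun y => G1 y^2))^(q/2) ≤ cubeE n (fun y => |f1 y|^q) := by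
        have h := Real.rpow_le_rpow (cubeE_nonneg fun y => sq_nonneg _) hih1
          (by positivity : (0:ℝ) ≤ q/2)
        rwa [← Real.rpow_mul hM1, show (2/q)*(q/2) = 1 by field_simp, Real.rpow_one] at h
      have hsplitN : cubeE (n+1) (fun x => |f x|^q)
          = (cubeE n (fun y => |f0 y|^q) + cubeE n (fun y => |f1 y|^q))/2 := cubeE_split _
      calc cubeE (n+1) (fun x => cubeT ρ f x ^ 2)
          = cubeE n (fun y => ((G0 y + G1 y)/2)^2 + ρ^2 * ((G1 y - G0 y)/2)^2) := hE1
        _ ≤ cubeE n (fun y => ((|G0 y|^q + |G1 y|^q)/2)^(2/q)) := cubeE_mono hE2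
        _ ≤ (((cubeE n (fun y => G0 y^2))^(q/2) + (cubeE n (fun y => G1 y^2))^(q/2))/2)^(2/q) :=
            hmink
        _ ≤ ((cubeE n (fun y => |f0 y|^q) + cubeE n (fun y => |f1 y|^q))/2)^(2/q) := by
            apply Real.rpow_le_rpow
            · have a0 : (0:ℝ) ≤ (cubeE n (fun y => G0 y^2))^(q/2) :=
                Real.rpow_nonneg (cubeE_nonneg fun y => sq_nonneg _) _
              have a1 : (0:ℝ) ≤ (cubeE n (fun y => G1 y^2))^(q/2) :=
                Real.rpow_nonneg (cubeE_nonneg fun y => sq_nonneg _) _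
              linarith
            · linarith
            · positivity
        _ = (cubeE (n+1) (fun x => |f x|^q)) ^ (2/q) := by rw [hsplitN]

lemma norm_sq_eq (q : ℝ) (hq : 0 < q) (g : (Fin n → Bool) → ℝ) :
    (cubeNorm n q g)^(2:ℕ) = (cubeE n (fun x => |g x|^q))^(2/q) := by
  unfold cubeNorm
  have hM : 0 ≤ cubeE n (fun x => |g x|^q) :=
    cubeE_nonneg fun x => Real.rpow_nonneg (abs_nonneg _) q
  rw [← Real.rpow_natCast ((cubeE n fun x => |g x|^q)^(1/q)) 2, ← Real.rpow_mul hM]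
  congr 1
  push_cast
  ring

lemma contM (g : (Fin n → Bool) → ℝ) :
    Continuous (fun t : ℝ => cubeE n (fun x => |g x| ^ (1+Real.exp (-2*t)))) := by
  unfold cubeE
  apply Continuous.div_const
  apply continuous_finset_sum
  intro x _
  rcases eq_or_ne (g x) 0 with hzx | hzx
  · have e : (fun t : ℝ => |g x| ^ (1+Real.exp (-2*t))) = fun _ => (0:ℝ) := by
      funext t
      rw [hzx, abs_zero, Real.zero_rpow (ne_of_gt (by positivity))]
    rw [e]; exact continuous_const
  · have hb : 0 < |g x| := abs_pos.2 hzx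
    have e : (fun t : ℝ => |g x| ^ (1+Real.exp (-2*t)))
        = fun t => Real.exp (Real.log |g x| * (1+Real.exp (-2*t))) := by
      funext t; rw [Real.rpow_def_of_pos hb]
    rw [e]
    fun_prop

lemma contNorm (g : (Fin n → Bool) → ℝ) :
    Continuous (fun t : ℝ => (cubeNorm n (1+Real.exp (-2*t)) g)^(2:ℕ)) := by
  apply Continuous.pow
  unfold cubeNorm
  by_cases hz : ∀ x, g x = 0
  · have e : (fun t : ℝ => (cubeE n fun x => |g x| ^ (1+Real.exp (-2*t)))
        ^ (1/(1+Real.exp (-2*t)))) = fun _ => (0:ℝ) := by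
      funext t
      have hM : cubeE n (fun x => |g x| ^ (1+Real.exp (-2*t))) = 0 := by
        have e2 : ∀ x, |g x| ^ (1+Real.exp (-2*t)) = (0:ℝ) := fun x => by
          rw [hz x, abs_zero, Real.zero_rpow (ne_of_gt (by positivity))]
        rw [cubeE_congr e2]
        unfold cubeE
        simp
      rw [hM, Real.zero_rpow (ne_of_gt (by positivity))]
    rw [e]; exact continuous_const
  · push_neg at hz
    obtain ⟨x₀, hx₀⟩ := hz
    have hMpos : ∀ t : ℝ, 0 < cubeE n (fun x => |g x| ^ (1+Real.exp (-2*t))) := by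
      intro t
      unfold cubeE
      apply div_pos ?_ (by positivity)
      apply Finset.sum_pos' (fun x _ => Real.rpow_nonneg (abs_nonneg _) _)
      exact ⟨x₀, Finset.mem_univ _, Real.rpow_pos_of_pos (abs_pos.2 hx₀) _⟩
    rw [continuous_iff_continuousAt]
    intro t₀
    have hcg : Continuous (fun t : ℝ => 1/(1+Real.exp (-2*t))) := by
      apply Continuous.div continuous_const
      · fun_prop
      · intro t; exact ne_of_gt (by positivity)
    exact ContinuousAt.rpow (contM g).continuousAt hcg.continuousAt (Or.inl (hMpos t₀).ne')

end Tensor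

end Cube

theorem stmt_19 (n k : ℕ) (hk : 1 ≤ k) (f : (Fin n → Bool) → ℝ)
    (hcoeff : ∀ S : Finset (Fin n), S.card < k → cubeCoeff n f S = 0) :
    (1 - Real.exp (-2)) * cubeE n (fun x => f x ^ 2) ≤
      2 * ∑ i : Fin n,
        ∫ t in (0 : ℝ)..(1 / (k : ℝ)),
          (cubeNorm n (1 + Real.exp (-2 * t)) (cubeD n i f)) ^ (2 : ℕ) := by
  classical
  set c : Finset (Fin n) → ℝ := cubeCoeff n f with hc_def
  set φ : ℝ → ℝ := fun t => ∑ S : Finset (Fin n), (c S)^2 * Real.exp ((-2*(S.card:ℝ))*t) with hφ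
  set ψ : ℝ → ℝ := fun t => ∑ S : Finset (Fin n),
    (c S)^2 * (2*(S.card:ℝ) * Real.exp ((-2*(S.card:ℝ))*t)) with hψ
  have hkpos : (0:ℝ) < (k:ℝ) := by
    have : 0 < k := lt_of_lt_of_le one_pos hk
    exact_mod_cast this
  have hderiv : ∀ t, HasDerivAt φ (-ψ t) t := by
    intro t
    have h : ∀ S ∈ (Finset.univ : Finset (Finset (Fin n))),
        HasDerivAt (fun u => (c S)^2 * Real.exp ((-2*(S.card:ℝ))*u))
          (-((c S)^2 * (2*(S.card:ℝ) * Real.exp ((-2*(S.card:ℝ))*t)))) t := by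
      intro S _
      have h1 : HasDerivAt (fun u : ℝ => (-2*(S.card:ℝ))*u) (-2*(S.card:ℝ)) t := by
        simpa using (hasDerivAt_id t).const_mul (-2*(S.card:ℝ))
      have h3 := (h1.exp).const_mul ((c S)^2)
      exact h3.congr_deriv (by ring)
    have hsum := HasDerivAt.fun_sum h
    have e : -ψ t = ∑ S : Finset (Fin n),
        -((c S)^2 * (2*(S.card:ℝ) * Real.exp ((-2*(S.card:ℝ))*t))) := by
      rw [hψ, ← Finset.sum_neg_distrib]
    rw [hφ, e]
    exact hsum
  have hψcont : Continuous ψ := by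
    rw [hψ]
    apply continuous_finset_sum
    intro S _
    fun_prop
  have hFTC : ∫ t in (0:ℝ)..(1/(k:ℝ)), ψ t = φ 0 - φ (1/(k:ℝ)) := by
    have h := intervalIntegral.integral_eq_sub_of_hasDerivAt (f := φ) (f' := fun t => -ψ t)
      (a := 0) (b := 1/(k:ℝ)) (fun t _ => hderiv t)
      ((hψcont.neg).intervalIntegrable _ _)
    rw [intervalIntegral.integral_neg] at h
    linarith
  have hφ0 : φ 0 = cubeE n (fun x => f x^2) := by
    rw [Cube.parseval f]
    rw [hφ]
    apply Finset.sum_congr rfl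
    intro S _
    rw [mul_zero, Real.exp_zero, mul_one]
  have hφ0' : φ 0 = ∑ S : Finset (Fin n), (c S)^2 := by
    rw [hφ]
    apply Finset.sum_congr rfl
    intro S _
    rw [mul_zero, Real.exp_zero, mul_one]
  have hφk : φ (1/(k:ℝ)) ≤ Real.exp (-2) * φ 0 := by
    rw [hφ0', hφ, Finset.mul_sum]
    apply Finset.sum_le_sum
    intro S _
    rcases eq_or_ne (c S) 0 with h | h
    · simp [h]
    · have hcard : k ≤ S.card := not_lt.1 fun hlt => h (hcoeff S hlt)
      have hcc : (k:ℝ) ≤ (S.card:ℝ) := by exact_mod_cast hcard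
      have hexp : (-2*(S.card:ℝ))*(1/(k:ℝ)) ≤ -2 := by
        rw [mul_one_div, div_le_iff₀ hkpos]
        nlinarith
      calc (c S)^2 * Real.exp ((-2*(S.card:ℝ))*(1/(k:ℝ)))
          ≤ (c S)^2 * Real.exp (-2) :=
            mul_le_mul_of_nonneg_left (Real.exp_le_exp.2 hexp) (sq_nonneg _)
        _ = Real.exp (-2) * (c S)^2 := by ring
  have hψ_eq : ∀ t : ℝ, ψ t
      = 2 * ∑ i : Fin n, cubeE n (fun x => Cube.cubeT (Real.exp (-t)) (cubeD n i f) x ^ 2) := by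
    intro t
    have hTi : ∀ i : Fin n, cubeE n (fun x => Cube.cubeT (Real.exp (-t)) (cubeD n i f) x ^2)
        = ∑ S : Finset (Fin n),
            (if i ∈ S then (c S)^2 * Real.exp ((-2*(S.card:ℝ))*t) else 0) := by
      intro i
      rw [Cube.energy_T]
      apply Finset.sum_congr rfl
      intro S _
      rw [Cube.coeff_D]
      by_cases hiS : i ∈ S
      · rw [if_pos hiS, if_pos hiS]
        have e : Real.exp (-t) ^ (2*S.card) = Real.exp ((-2*(S.card:ℝ))*t) := by
          rw [← Real.exp_nat_mul]
          congr 1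
          push_cast
          ring
        rw [e, hc_def]
        ring
      · rw [if_neg hiS, if_neg hiS]
        norm_num
    rw [Finset.sum_congr rfl fun i _ => hTi i, Finset.sum_comm]
    have hin : ∀ S : Finset (Fin n),
        (∑ i : Fin n, if i ∈ S then (c S)^2 * Real.exp ((-2*(S.card:ℝ))*t) else 0)
        = (S.card:ℝ) * ((c S)^2 * Real.exp ((-2*(S.card:ℝ))*t)) := by
      intro S
      rw [Finset.sum_ite_mem, Finset.univ_inter, Finset.sum_const, nsmul_eq_mul]
    rw [Finset.sum_congr rfl fun S _ => hin S, hψ, Finset.mul_sum]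
    apply Finset.sum_congr rfl
    intro S _
    ring
  have hHC : ∀ i : Fin n, ∀ t : ℝ, 0 ≤ t →
      cubeE n (fun x => Cube.cubeT (Real.exp (-t)) (cubeD n i f) x ^2)
        ≤ (cubeNorm n (1+Real.exp (-2*t)) (cubeD n i f))^(2:ℕ) := by
    intro i t ht
    have hρ0 : 0 ≤ Real.exp (-t) := (Real.exp_pos _).le
    have hρ1 : Real.exp (-t) ≤ 1 := by
      calc Real.exp (-t) ≤ Real.exp 0 := Real.exp_le_exp.2 (by linarith)
        _ = 1 := Real.exp_zero
    have h := Cube.hc n hρ0 hρ1 (cubeD n i f)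
    have hsq : Real.exp (-t)^2 = Real.exp (-2*t) := by
      rw [← Real.exp_nat_mul]
      congr 1
      push_cast
      ring
    rw [hsq] at h
    rw [Cube.norm_sq_eq _ (by positivity)]
    exact h
  have hInt_i : ∀ i : Fin n, IntervalIntegrable
      (fun t => (cubeNorm n (1+Real.exp (-2*t)) (cubeD n i f))^(2:ℕ)) volume 0 (1/(k:ℝ)) :=
    fun i => (Cube.contNorm (cubeD n i f)).intervalIntegrable _ _
  have hIntRHSfun : IntervalIntegrable
      (fun t => 2 * ∑ i : Fin n, (cubeNorm n (1+Real.exp (-2*t)) (cubeD n i f))^(2:ℕ))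
      volume 0 (1/(k:ℝ)) := by
    apply Continuous.intervalIntegrable
    apply Continuous.mul continuous_const
    exact continuous_finset_sum _ fun i _ => Cube.contNorm (cubeD n i f)
  have hmono : ∫ t in (0:ℝ)..(1/(k:ℝ)), ψ t
      ≤ ∫ t in (0:ℝ)..(1/(k:ℝ)),
          2 * ∑ i : Fin n, (cubeNorm n (1+Real.exp (-2*t)) (cubeD n i f))^(2:ℕ) := by
    apply intervalIntegral.integral_mono_on (by positivity)
      (hψcont.intervalIntegrable _ _) hIntRHSfun
    intro t ht
    rw [hψ_eq t]
    have hsumle : ∑ i : Fin n, cubeE n (fun x => Cube.cubeT (Real.exp (-t)) (cubeD n i f) x ^ 2)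
        ≤ ∑ i : Fin n, (cubeNorm n (1+Real.exp (-2*t)) (cubeD n i f))^(2:ℕ) :=
      Finset.sum_le_sum fun i _ => hHC i t ht.1
    linarith
  have hsplitInt : ∫ t in (0:ℝ)..(1/(k:ℝ)),
        2 * ∑ i : Fin n, (cubeNorm n (1+Real.exp (-2*t)) (cubeD n i f))^(2:ℕ)
      = 2 * ∑ i : Fin n, ∫ t in (0:ℝ)..(1/(k:ℝ)),
          (cubeNorm n (1+Real.exp (-2*t)) (cubeD n i f))^(2:ℕ) := by
    rw [intervalIntegral.integral_const_mul]
    rw [intervalIntegral.integral_finset_sum (fun i _ => hInt_i i)]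
  calc (1 - Real.exp (-2)) * cubeE n (fun x => f x ^ 2)
      = (1 - Real.exp (-2)) * φ 0 := by rw [hφ0]
    _ ≤ φ 0 - φ (1/(k:ℝ)) := by linarith [hφk]
    _ = ∫ t in (0:ℝ)..(1/(k:ℝ)), ψ t := hFTC.symm
    _ ≤ _ := hmono.trans_eq hsplitInt
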